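/- Let p > 3 be prime and δ ∈ ℤ/pℤ with δ² + δ + 1 = 0, u = 2δ², v = δ, and let β be the sequence of the Theorem B2 recurrences. Then for every i ≥ 1, β_i ≠ 0; more precisely, β_{3k+3} = -δ/3^{a(k)} for some integer a(k) ≥ 1 for each k ≥ 0, where every β_{3k+3} equals β_{3j+3}/9 or -δ/3 according to the residue of k, and each β_{3k+1}, β_{3k+2} with k ≥ 1 lies in {-3, -3/δ, 3δ+3, 3δ+3/δ, β_{3j+1}, 3δ-β_{3j+1}}. -/

import Mathlib

theorem stmt7 (p : ℕ) [Fact p.Prime] (hgt : 3 < p)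
    (δ : ZMod p) (hδ : δ^2 + δ + 1 = 0)
    (u v : ZMod p) (hu : u = 2*δ^2) (hv : v = δ)
    (α β : ℕ → ZMod p)
    (hα1 : α 1 = -u) (hα2 : α 2 = u * (2*v - 1 - u^2) / (v - u^2))
    (hα3 : α 3 = -u * (v - 1) / (v - u^2))
    (hβ1 : β 1 = 1) (hβ2 : β 2 = u^2 - v)
    (hβ3 : β 3 = (u^2 + u^4 + v^3 - 3*u^2*v) / (v - u^2)^2)
    (hrα4 : ∀ k : ℕ, α (3*k+4) = -u)
    (hrβ4 : ∀ k : ℕ, β (3*k+4) = β (k+2) / (β (3*k+3) * β (3*k+2)))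
    (hrβ5 : ∀ k : ℕ, β (3*k+5) = u^2 - v - β (3*k+4))
    (hrα5 : ∀ k : ℕ, α (3*k+5) = u - (α (k+2) + u*v - α (3*k+2) * β (3*k+4)) / β (3*k+5))
    (hrα6 : ∀ k : ℕ, α (3*k+6) = u - α (3*k+5))
    (hrβ6 : ∀ k : ℕ, β (3*k+6) = v - α (3*k+5) * α (3*k+6)) :
    (∀ i : ℕ, 1 ≤ i → β i ≠ 0) ∧
    (∀ k : ℕ, ∃ a : ℕ, 1 ≤ a ∧ β (3*k+3) = -δ / 3^a) ∧
    (∀ k : ℕ, β (3*k+3) = -δ/3 ∨ ∃ j : ℕ, β (3*k+3) = β (3*j+3) / 9) ∧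
    (∀ k : ℕ, 1 ≤ k →
      (β (3*k+1) ∈ ({-3, -3/δ, 3*δ+3, 3*δ+3/δ} : Set (ZMod p)) ∨
        ∃ j : ℕ, β (3*k+1) = β (3*j+1) ∨ β (3*k+1) = 3*δ - β (3*j+1)) ∧
      (β (3*k+2) ∈ ({-3, -3/δ, 3*δ+3, 3*δ+3/δ} : Set (ZMod p)) ∨
        ∃ j : ℕ, β (3*k+2) = β (3*j+1) ∨ β (3*k+2) = 3*δ - β (3*j+1))) := by
  have h3 : (3 : ZMod p) ≠ 0 := by
    have : ((3:ℕ) : ZMod p) ≠ 0 := by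
      rw [Ne, ZMod.natCast_eq_zero_iff]
      intro hdvd
      have := Nat.le_of_dvd (by norm_num) hdvd
      omega
    simpa using this
  have hδ0 : δ ≠ 0 := by
    intro h; rw [h] at hδ; simp at hδ
  have h1δ : (1 : ZMod p) - δ ≠ 0 := by
    intro h
    have : δ = 1 := by linear_combination -h
    rw [this] at hδ
    apply h3; linear_combination hδ
  have h33 : (3 : ZMod p) + 3*δ ≠ 0 := by
    intro h
    apply hδ0
    have h1 : δ = -1 := by
      have h3' : (3:ZMod p) * (1 + δ) = 0 := by linear_combination h
      rcases mul_eq_zero.mp h3' with h' | h'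
      · exact absurd h' h3
      · linear_combination h'
    rw [h1] at hδ
    have : (1 : ZMod p) = 0 := by linear_combination hδ
    exact absurd this one_ne_zero
  have hm3 : (-3 : ZMod p) ≠ 0 := neg_ne_zero.mpr h3
  have h9 : (9 : ZMod p) ≠ 0 := by
    rw [show (9:ZMod p) = 3*3 from by norm_num]
    exact mul_ne_zero h3 h3
  have hδ3 : δ^3 = 1 := by linear_combination (δ - 1) * hδ
  have hq8 : ∀ n : ℕ, β (3*n+5) = 3*δ - β (3*n+4) := by
    intro n
    rw [hrβ5 n, hu, hv]
    linear_combination (4*δ^2 - 4*δ) * hδ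
  have hq5 : ∀ n : ℕ, β (3*n+6) = (α (3*n+5) - δ^2)^2 := by
    intro n
    rw [hrβ6 n, hrα6 n, hu, hv]
    linear_combination (δ - δ^2) * hδ
  have key : ∀ k : ℕ,
      α (3*k+1) = -u ∧
      α (3*k+3) = u - α (3*k+2) ∧
      (k % 3 = 0 → α (3*k+2) = δ^2 - (1-δ)/3) ∧
      (k % 3 = 2 → α (3*k+2) = δ^2 + (1-δ)/3) ∧
      (∀ j, k = 3*j+1 → α (3*k+2) = δ^2 + (α (3*j+2) - δ^2)/3) ∧
      (∃ m : ℕ, 1 ≤ m ∧ (α (3*k+2) = δ^2 + (1-δ)/3^m ∨ α (3*k+2) = δ^2 - (1-δ)/3^m)) ∧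
      β (3*k+3) = (α (3*k+2) - δ^2)^2 ∧
      (k % 3 = 1 → β (3*k+1) = 3+3*δ) ∧
      (k % 3 = 2 → β (3*k+1) = -3) ∧
      (1 ≤ k → β (3*k+2) = 3*δ - β (3*k+1)) ∧
      (k % 3 = 0 → β (3*k+2) = β (k+2)) ∧
      (1 ≤ k → (β (3*k+1) = -3 ∨ β (3*k+1) = 3+3*δ)) ∧
      β (3*k+1) ≠ 0 ∧ β (3*k+2) ≠ 0 := by
    intro k
    induction k using Nat.strong_induction_on with
    | _ k IH =>
    match k with
    | 0 =>
      have hvu : v - u^2 = -(3*δ) := by rw [hu, hv]; linear_combination (-4*δ^2+4*δ) * hδ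
      have hvu0 : v - u^2 ≠ 0 := by rw [hvu]; exact neg_ne_zero.mpr (mul_ne_zero h3 hδ0)
      have ha2 : α 2 = δ^2 - (1-δ)/3 := by
        rw [hα2, hvu, hu, hv]
        field_simp
        ring_nf
        linear_combination (8*δ^3 - 8*δ^2 + 1) * hδ
      have ha3 : α 3 = u - α 2 := by
        rw [hα3, hα2]
        field_simp
        ring
      have hb3 : β 3 = (α 2 - δ^2)^2 := by
        rw [hβ3, ha2, hvu, hu, hv]
        field_simp
        ring_nf
        linear_combination (16*δ^4 - 16*δ^3 + 4*δ - 1) * hδ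
      have hb2 : β 2 = 3*δ := by
        rw [hβ2, hu, hv]; linear_combination (4*δ^2-4*δ) * hδ
      refine ⟨by simpa using hα1, by simpa using ha3, fun _ => by simpa using ha2,
        by omega, fun j hj => by omega, ⟨1, le_refl 1, Or.inr (by simpa using ha2)⟩,
        by simpa using hb3, by omega, by omega, by omega,
        fun _ => by norm_num, by omega,
        by simpa [hβ1] using one_ne_zero,
        by simp only [show 3*0+2 = 2 from rfl]; rw [hb2]; exact mul_ne_zero h3 hδ0⟩
    | n+1 =>
      obtain ⟨ha1, ha3, ha2a, ha2b, ha2c, ⟨m, hm1, hwm⟩, hb3, hb1a, hb1b, hb2e, hb2j,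
        hb1mem, hb1ne, hb2ne⟩ := IH n (by omega)
      have e1 : 3*(n+1)+1 = 3*n+4 := by omega
      have e2 : 3*(n+1)+2 = 3*n+5 := by omega
      have e3 : 3*(n+1)+3 = 3*n+6 := by omega
      simp only [e1, e2, e3]
      have hmod : n % 3 = 0 ∨ n % 3 = 1 ∨ n % 3 = 2 := by omega
      -- general facts
      have na1 : α (3*n+4) = -u := hrα4 n
      have na3 : α (3*n+6) = u - α (3*n+5) := hrα6 n
      have nb3 : β (3*n+6) = (α (3*n+5) - δ^2)^2 := hq5 n
      have nb2e : β (3*n+5) = 3*δ - β (3*n+4) := hq8 n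
      rcases hmod with hn0 | hn1 | hn2
      · -- n % 3 = 0, n = 3*j
        set j := n / 3 with hjdef
        have hj : n = 3*j := by omega
        obtain ⟨_, _, _, _, _, ⟨mj, hmj1, hwj⟩, _, _, _, _, _, _, _, _⟩ := IH j (by omega)
        have wv : α (3*n+2) = δ^2 - (1-δ)/3 := ha2a hn0
        have b3v : β (3*n+3) = -δ/3 := by
          rw [hb3, wv]
          field_simp
          ring_nf
          linear_combination 1 * hδ
        have b2eq : β (3*n+2) = β (n+2) := hb2j hn0
        have b4 : β (3*n+4) = 3+3*δ := by
          rw [hrβ4 n, b3v, ← b2eq]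
          rw [div_eq_iff (mul_ne_zero (div_ne_zero (neg_ne_zero.mpr hδ0) h3) hb2ne)]
          field_simp
          ring_nf
          linear_combination 1 * hδ
        have b5 : β (3*n+5) = -3 := by rw [nb2e, b4]; ring
        have a5 : α (3*n+5) = δ^2 + (α (3*j+2) - δ^2)/3 := by
          have en2 : n+2 = 3*j+2 := by omega
          rw [hrα5 n, b4, b5, wv, en2, hu, hv]
          field_simp
          ring_nf
          linear_combination (1 - δ) * hδ
        refine ⟨na1, na3, by omega, by omega, ?_, ?_, nb3, fun _ => b4, by omega,
          fun _ => nb2e, by omega, fun _ => Or.inr b4, by rw [b4]; exact h33,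
          by rw [b5]; exact hm3⟩
        · intro j' hj'
          have : j' = j := by omega
          rw [this]; exact a5
        · refine ⟨mj+1, by omega, ?_⟩
          rcases hwj with h | h
          · left
            rw [a5, h, pow_succ]
            ring
          · right
            rw [a5, h, pow_succ]
            ring
      · -- n % 3 = 1, n = 3*j+1
        set j := n / 3 with hjdef
        have hj : n = 3*j+1 := by omega
        obtain ⟨_, ja3, _, _, _, ⟨mj, hmj1, hwj⟩, jb3, _, _, _, _, _, _, _⟩ := IH j (by omega)
        have hne0 : (1-δ)/3^mj ≠ 0 := div_ne_zero h1δ (pow_ne_zero _ h3)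
        have hWne : α (3*j+2) - δ^2 ≠ 0 := by
          rcases hwj with h | h
          · rw [h]; intro hc; apply hne0; linear_combination hc
          · rw [h]; intro hc; apply hne0; linear_combination -hc
        have wv : α (3*n+2) = δ^2 + (α (3*j+2) - δ^2)/3 := ha2c j hj
        have b3v : β (3*n+3) = (α (3*j+2) - δ^2)^2/9 := by
          rw [hb3, wv]
          field_simp
          ring
        have b1v : β (3*n+1) = 3+3*δ := hb1a hn1
        have b2v : β (3*n+2) = -3 := by
          rw [hb2e (by omega), b1v]; ring
        have bk2 : β (n+2) = (α (3*j+2) - δ^2)^2 := by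
          have en2 : n+2 = 3*j+3 := by omega
          rw [en2, jb3]
        have b4 : β (3*n+4) = -3 := by
          rw [hrβ4 n, b3v, b2v, bk2]
          rw [div_eq_iff (mul_ne_zero (div_ne_zero (pow_ne_zero 2 hWne) h9) hm3)]
          field_simp
          ring
        have b5 : β (3*n+5) = 3*δ+3 := by rw [nb2e, b4]; ring
        have ak2 : α (n+2) = u - α (3*j+2) := by
          have en2 : n+2 = 3*j+3 := by omega
          rw [en2, ja3]
        have a5 : α (3*n+5) = δ^2 + (1-δ)/3 := by
          have e5 : (3:ZMod p)*δ+3 = 3+3*δ := by ring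
          rw [hrα5 n, b4, b5, e5, wv, ak2, hu, hv]
          have h1δ' : (1:ZMod p)+δ ≠ 0 := fun h => h33 (by linear_combination 3*h)
          field_simp
          ring_nf
          linear_combination (δ - 1) * hδ
        refine ⟨na1, na3, by omega, fun _ => a5, by omega,
          ⟨1, le_refl 1, Or.inl (by simpa using a5)⟩, nb3, by omega, fun _ => b4,
          fun _ => nb2e, by omega, fun _ => Or.inl b4, by rw [b4]; exact hm3,
          by rw [b5, show (3:ZMod p)*δ+3 = 3+3*δ from by ring]; exact h33⟩
      · -- n % 3 = 2, n = 3*j+2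
        set j := n / 3 with hjdef
        have hj : n = 3*j+2 := by omega
        obtain ⟨j1a1, _, _, _, _, _, _, _, _, j1b2e, _, j1b1mem, j1b1ne, _⟩ :=
          IH (j+1) (by omega)
        have b1v : β (3*n+1) = -3 := hb1b hn2
        have b2v : β (3*n+2) = 3*δ+3 := by rw [hb2e (by omega), b1v]; ring
        have wv : α (3*n+2) = δ^2 + (1-δ)/3 := ha2b hn2
        have b3v : β (3*n+3) = -δ/3 := by
          rw [hb3, wv]
          field_simp
          ring_nf
          linear_combination 1 * hδ
        have en2 : n+2 = 3*(j+1)+1 := by omega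
        have b4 : β (3*n+4) = β (3*(j+1)+1) := by
          rw [hrβ4 n, b3v, b2v, en2]
          rw [div_eq_iff (by
            apply mul_ne_zero (div_ne_zero (neg_ne_zero.mpr hδ0) h3)
            rw [show (3:ZMod p)*δ+3 = 3+3*δ from by ring]; exact h33)]
          field_simp
          linear_combination 1 * hδ
        have b5 : β (3*n+5) = 3*δ - β (3*(j+1)+1) := by rw [nb2e, b4]
        have ak2 : α (n+2) = -u := by rw [en2]; exact j1a1
        have a5 : α (3*n+5) = δ^2 - (1-δ)/3 := by
          rw [hrα5 n, b4, b5, wv, ak2, hu, hv]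
          rcases j1b1mem (by omega) with h | h <;> rw [h]
          · rw [show (3:ZMod p)*δ - -3 = 3+3*δ from by ring]
            have h1δ' : (1:ZMod p)+δ ≠ 0 := fun h => h33 (by linear_combination 3*h)
            field_simp
            ring_nf
            linear_combination δ * hδ
          · rw [show (3:ZMod p)*δ - (3+3*δ) = -3 from by ring]
            field_simp
            ring_nf
            linear_combination (-δ) * hδ
        have mem : β (3*(j+1)+1) = -3 ∨ β (3*(j+1)+1) = 3+3*δ := j1b1mem (by omega)
        refine ⟨na1, na3, fun _ => a5, by omega, by omega,
          ⟨1, le_refl 1, Or.inr (by simpa using a5)⟩, nb3, by omega, by omega,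
          fun _ => nb2e, ?_, fun _ => by rw [b4]; exact mem,
          by rw [b4]; exact j1b1ne, ?_⟩
        · intro _
          have en3 : n+1+2 = 3*(j+1)+2 := by omega
          rw [en3, nb2e, b4, j1b2e (by omega)]
        · rw [b5]
          rcases mem with h | h <;> rw [h]
          · rw [show (3:ZMod p)*δ - -3 = 3+3*δ from by ring]; exact h33
          · rw [show (3:ZMod p)*δ - (3+3*δ) = -3 from by ring]; exact hm3
  -- derive conclusions
  have hWne : ∀ k : ℕ, α (3*k+2) - δ^2 ≠ 0 := by
    intro k
    obtain ⟨_, _, _, _, _, ⟨m, hm1, hw⟩, _⟩ := key k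
    have hne0 : (1-δ)/3^m ≠ 0 := div_ne_zero h1δ (pow_ne_zero _ h3)
    rcases hw with h | h
    · rw [h]; intro hc; apply hne0; linear_combination hc
    · rw [h]; intro hc; apply hne0; linear_combination -hc
  refine ⟨?_, ?_, ?_, ?_⟩
  · -- nonvanishing
    intro i hi
    have hm : i % 3 = 1 ∨ i % 3 = 2 ∨ i % 3 = 0 := by omega
    rcases hm with h | h | h
    · obtain ⟨_, _, _, _, _, _, _, _, _, _, _, _, hb1ne, _⟩ := key (i/3)
      rwa [show 3*(i/3)+1 = i from by omega] at hb1ne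
    · obtain ⟨_, _, _, _, _, _, _, _, _, _, _, _, _, hb2ne⟩ := key (i/3)
      rwa [show 3*(i/3)+2 = i from by omega] at hb2ne
    · obtain ⟨_, _, _, _, _, _, hb3, _⟩ := key (i/3-1)
      rw [show 3*(i/3-1)+3 = i from by omega] at hb3
      rw [hb3]
      exact pow_ne_zero _ (hWne (i/3-1))
  · -- β (3k+3) = -δ/3^a
    intro k
    obtain ⟨_, _, _, _, _, ⟨m, hm1, hw⟩, hb3, _⟩ := key k
    refine ⟨2*m-1, by omega, ?_⟩
    have hsq : β (3*k+3) = ((1-δ)/3^m)^2 := by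
      rcases hw with h | h <;> rw [hb3, h] <;> ring
    rw [hsq]
    have h3m : ((3:ZMod p)^m) ≠ 0 := pow_ne_zero _ h3
    rw [div_pow, div_eq_div_iff (pow_ne_zero _ h3m) (pow_ne_zero _ h3)]
    have e1 : ((3:ZMod p)^m)^2 = 3^(2*m-1) * 3 := by
      rw [← pow_mul, ← pow_succ]
      congr 1
      omega
    rw [e1]
    linear_combination ((3:ZMod p)^(2*m-1)) * hδ
  · -- β (3k+3) = -δ/3 or β (3j+3)/9
    intro k
    have hm : k % 3 = 0 ∨ k % 3 = 2 ∨ k % 3 = 1 := by omega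
    obtain ⟨_, _, ha2a, ha2b, ha2c, _, hb3, _⟩ := key k
    rcases hm with h | h | h
    · left
      rw [hb3, ha2a h]
      field_simp
      ring_nf
      linear_combination 1 * hδ
    · left
      rw [hb3, ha2b h]
      field_simp
      ring_nf
      linear_combination 1 * hδ
    · right
      refine ⟨k/3, ?_⟩
      obtain ⟨_, _, _, _, _, _, hb3j, _⟩ := key (k/3)
      rw [hb3, ha2c (k/3) (by omega), hb3j]
      field_simp
      ring
  · -- memberships
    intro k hk
    obtain ⟨_, _, _, _, _, _, _, _, _, hb2e, _, hb1mem, _, _⟩ := key k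
    have hδinv : (3:ZMod p)*δ+3 = -3/δ := by
      rw [eq_div_iff hδ0]
      linear_combination 3 * hδ
    constructor
    · rcases hb1mem hk with h | h
      · exact Or.inl (by rw [h]; left; rfl)
      · refine Or.inl ?_
        rw [h]
        right; right; left
        ring
    · rw [hb2e hk]
      rcases hb1mem hk with h | h
      · refine Or.inl ?_
        rw [h]
        right; right; left
        ring
      · refine Or.inl ?_
        rw [h]
        left
        ring
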